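/- Let K be a finitely generated subgroup of the free group F_A with complete Stallings automaton S(K) = (Q, A, δ, q₀) (equivalently, K has finite index), and suppose K is nontrivial. Then K is normal in F_A if and only if the transition monoid M(K) is a group of cardinality |Q|. -/
import Mathlib


/-- Reading a word over `Ã = A × Bool` in a complete deterministic automaton. -/
def readT {Q A : Type} (δ : Q → A × Bool → Q) : Q → List (A × Bool) → Q
  | q, [] => q
  | q, x :: w => readT δ (δ q x) w

theorem readT_append {Q A : Type} (δ : Q → A × Bool → Q) (q : Q) (u v : List (A × Bool)) :
    readT δ q (u ++ v) = readT δ (readT δ q u) v := by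
  induction u generalizing q with
  | nil => rfl
  | cons x u ih => simp [readT, ih]

theorem readT_invRev {Q A : Type} (δ : Q → A × Bool → Q)
    (hinv : ∀ (q : Q) (a : A) (b : Bool), δ (δ q (a, b)) (a, !b) = q)
    (q : Q) (w : List (A × Bool)) :
    readT δ (readT δ q w) (FreeGroup.invRev w) = q := by
  induction w generalizing q with
  | nil => rfl
  | cons x w ih =>
    obtain ⟨a, b⟩ := x
    have h : FreeGroup.invRev ((a, b) :: w) = FreeGroup.invRev w ++ [(a, !b)] := by
      simp [FreeGroup.invRev]
    rw [h]
    show readT δ (readT δ (δ q (a, b)) w) (FreeGroup.invRev w ++ [(a, !b)]) = q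
    rw [readT_append, ih]
    exact hinv q a b

theorem readT_invRev' {Q A : Type} (δ : Q → A × Bool → Q)
    (hinv : ∀ (q : Q) (a : A) (b : Bool), δ (δ q (a, b)) (a, !b) = q)
    (q : Q) (w : List (A × Bool)) :
    readT δ (readT δ q (FreeGroup.invRev w)) w = q := by
  have := readT_invRev δ hinv q (FreeGroup.invRev w)
  rwa [FreeGroup.invRev_invRev] at this

/-- cancel a common word read on the right -/
theorem readT_cancel {Q A : Type} (δ : Q → A × Bool → Q)
    (hinv : ∀ (q : Q) (a : A) (b : Bool), δ (δ q (a, b)) (a, !b) = q)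
    {p p' : Q} (w : List (A × Bool)) (h : readT δ p w = readT δ p' w) : p = p' := by
  have := congrArg (fun q => readT δ q (FreeGroup.invRev w)) h
  simpa [readT_invRev δ hinv] using this

/-- Let `K` be a nontrivial finitely generated subgroup of `F_A` whose
Stallings automaton `S(K) = (Q, A, δ, q₀)` is complete (equivalently, `K` has finite
index). Then `K` is normal in `F_A` iff the transition monoid `M(K)` is a group of
cardinality `|Q|`. -/
theorem stmt_6 {A Q : Type} [Fintype Q] (K : Subgroup (FreeGroup A))
    (δ : Q → A × Bool → Q) (q₀ : Q)
    -- complete inverse automaton: each letter acts with inverse given by the involution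
    (hinv : ∀ (q : Q) (a : A) (b : Bool), δ (δ q (a, b)) (a, !b) = q)
    -- connected with basepoint q₀:
    (hconn : ∀ q : Q, ∃ w : List (A × Bool), readT δ q₀ w = q)
    -- loops at the basepoint spell exactly the words representing elements of K:
    (hlink : ∀ w : List (A × Bool), FreeGroup.mk w ∈ K ↔ readT δ q₀ w = q₀)
    (hK : K ≠ ⊥) :
    K.Normal ↔
      ((∀ f ∈ Set.range (fun w : List (A × Bool) => fun q : Q => readT δ q w),
          ∃ g ∈ Set.range (fun w : List (A × Bool) => fun q : Q => readT δ q w),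
            f ∘ g = id ∧ g ∘ f = id) ∧
        (Set.range (fun w : List (A × Bool) => fun q : Q => readT δ q w)).ncard =
          Fintype.card Q) := by
  classical
  set S : Set (Q → Q) := Set.range (fun w : List (A × Bool) => fun q : Q => readT δ q w) with hS
  -- evaluation at the basepoint
  let e : ↥S → Q := fun f => f.1 q₀
  have he_surj : Function.Surjective e := by
    intro q
    obtain ⟨u, hu⟩ := hconn q
    exact ⟨⟨_, ⟨u, rfl⟩⟩, hu⟩
  have hScard : S.ncard = Nat.card ↥S := (Nat.card_coe_set_eq S).symm
  constructor
  · intro hN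
    -- key: every loop at q₀ is a loop everywhere
    have key : ∀ w : List (A × Bool), readT δ q₀ w = q₀ → ∀ q : Q, readT δ q w = q := by
      intro w hw q
      obtain ⟨u, hu⟩ := hconn q
      have hwK : FreeGroup.mk w ∈ K := (hlink w).2 hw
      have hconj : FreeGroup.mk (u ++ w ++ FreeGroup.invRev u) ∈ K := by
        have := hN.conj_mem _ hwK (FreeGroup.mk u)
        simpa [FreeGroup.mul_mk, FreeGroup.inv_mk] using this
      have h2 := (hlink _).1 hconj
      rw [readT_append, readT_append, hu] at h2
      -- h2 : readT δ (readT δ q w) (invRev u) = q₀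
      have := congrArg (fun p => readT δ p u) h2
      simpa [readT_invRev' δ hinv, hu] using this
    refine ⟨?_, ?_⟩
    · rintro f ⟨w, rfl⟩
      refine ⟨fun q => readT δ q (FreeGroup.invRev w), ⟨FreeGroup.invRev w, rfl⟩, ?_, ?_⟩
      · funext q; exact readT_invRev' δ hinv q w
      · funext q; exact readT_invRev δ hinv q w
    · have he_inj : Function.Injective e := by
        rintro ⟨f, w, rfl⟩ ⟨g, v, rfl⟩ h
        simp only [e] at h
        -- h : readT δ q₀ w = readT δ q₀ v
        have hloop : readT δ q₀ (w ++ FreeGroup.invRev v) = q₀ := by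
          rw [readT_append, h]
          exact readT_invRev δ hinv q₀ v
        apply Subtype.ext
        funext q
        have := key _ hloop q
        rw [readT_append] at this
        have := congrArg (fun p => readT δ p v) this
        simpa [readT_invRev' δ hinv] using this
      have : Nat.card ↥S = Nat.card Q :=
        Nat.card_eq_of_bijective e ⟨he_inj, he_surj⟩
      rw [hScard, this, Nat.card_eq_fintype_card]
  · rintro ⟨-, hcard⟩
    have hbij : Function.Bijective e := by
      rw [Nat.bijective_iff_surjective_and_card]
      exact ⟨he_surj, by rw [← hScard, hcard, Nat.card_eq_fintype_card]⟩
    -- identity loops: any word fixing q₀ fixes everything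
    have key : ∀ w : List (A × Bool), readT δ q₀ w = q₀ → ∀ q : Q, readT δ q w = q := by
      intro w hw q
      have h1 : (⟨fun q => readT δ q w, ⟨w, rfl⟩⟩ : ↥S) =
          (⟨fun q => readT δ q ([] : List (A × Bool)), ⟨[], rfl⟩⟩ : ↥S) := by
        apply hbij.injective
        simpa [e, readT] using hw
      have := congrFun (congrArg Subtype.val h1) q
      simpa [readT] using this
    constructor
    intro n hn g
    have hn' : FreeGroup.mk n.toWord ∈ K := by rw [FreeGroup.mk_toWord]; exact hn
    have hloop := key n.toWord ((hlink _).1 hn')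
    have : g * n * g⁻¹ =
        FreeGroup.mk (g.toWord ++ n.toWord ++ FreeGroup.invRev g.toWord) := by
      rw [← FreeGroup.mul_mk, ← FreeGroup.mul_mk, ← FreeGroup.inv_mk,
        FreeGroup.mk_toWord, FreeGroup.mk_toWord]
    rw [this, hlink]
    rw [readT_append, readT_append, hloop]
    exact readT_invRev δ hinv q₀ g.toWord
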